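/- Let n be an odd integer with n ≥ 3, let k be an integer with 1 ≤ k < n, and let X₁, …, X_n be i.i.d. standard Gaussian random variables. Let m̂ := X_{ν,n} with ν = (n+1)/2 be the sample median, and set p̂_k := (1/(n−k)) Σ_{j=1}^{n−k} 1(X_j > m̂, X_{j+k} > m̂). Then E[p̂_k] = 1/4 − 3/(4n); in particular p̂_k has bias −3/(4n) = O(1/n) as an estimator of p_k := P(X_1 > 0, X_{1+k} > 0) = 1/4. -/

import Mathlib

open MeasureTheory ProbabilityTheory Filter Real Set

/-- The `ν`-th largest element of a multiset of reals (1-indexed), i.e. the order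
statistic `X_{ν,n}` when `X_{1,n} ≥ ⋯ ≥ X_{n,n}`. -/
noncomputable def nthLargest (s : Multiset ℝ) (ν : ℕ) : ℝ :=
  (s.sort (· ≤ ·)).getD (Multiset.card s - ν) 0

section Aux

open scoped ENNReal

lemma sorted_getD_le_iff : ∀ {l : List ℝ}, l.Pairwise (· ≤ ·) → ∀ {i : ℕ}, i < l.length → ∀ t : ℝ,
    (l.getD i 0 ≤ t ↔ i < l.countP (fun x => decide (x ≤ t)))
  | [], _, i, hi, t => by simp at hi
  | a :: l, hl, i, hi, t => by
    rw [List.pairwise_cons] at hl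
    match i with
    | 0 =>
      simp only [List.getD_eq_getElem _ 0 hi, List.getElem_cons_zero, List.countP_cons]
      constructor
      · intro h
        have : (decide (a ≤ t)) = true := by simpa using h
        simp [this]
      · intro h
        by_contra hat
        have hc : l.countP (fun x => decide (x ≤ t)) = 0 := by
          rw [List.countP_eq_zero]
          intro x hx
          simpa using fun hxt => hat <| le_trans (hl.1 x hx) hxt
        simp [hc, hat] at h
    | i + 1 =>
      have hi' : i < l.length := by simpa using hi
      have ih := sorted_getD_le_iff hl.2 hi' t
      have hgd : (a :: l).getD (i+1) 0 = l.getD i 0 := by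
        rw [List.getD_eq_getElem _ 0 hi, List.getD_eq_getElem _ 0 hi']
        simp
      rw [hgd, ih, List.countP_cons]
      by_cases hat : a ≤ t
      · simp [hat]
      · have hc : l.countP (fun x => decide (x ≤ t)) = 0 := by
          rw [List.countP_eq_zero]
          intro x hx
          simpa using fun hxt => hat <| le_trans (hl.1 x hx) hxt
        simp [hc, hat]

lemma median_countP (s : Multiset ℝ) (r : ℕ) (hr : 1 ≤ r)
    (hcard : Multiset.card s = 2*r+1) (hnd : s.Nodup) :
    s.countP (fun x => nthLargest s (r+1) < x) = r := by
  set l := s.sort (· ≤ ·) with hl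
  have hsl : (↑l : Multiset ℝ) = s := Multiset.sort_eq s _
  have hlen : l.length = 2*r+1 := by rw [hl, Multiset.length_sort, hcard]
  have hsort : l.Pairwise (· ≤ ·) := Multiset.pairwise_sort s _
  have hnodup : l.Nodup := by rwa [← Multiset.coe_nodup, hsl]
  have hm : nthLargest s (r+1) = l.getD r 0 := by
    rw [nthLargest, hcard, ← hl]
    congr 1
    omega
  set m := nthLargest s (r+1) with hmdef
  have hr1 : r < l.length := by omega
  have hr2 : r + 1 < l.length := by omega
  have h1 : r < l.countP (fun x => decide (x ≤ m)) := by
    rw [← sorted_getD_le_iff hsort hr1 m, ← hm]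
  have h2 : ¬ (r + 1 < l.countP (fun x => decide (x ≤ m))) := by
    rw [← sorted_getD_le_iff hsort hr2 m, hm, List.getD_eq_getElem _ 0 hr1,
      List.getD_eq_getElem _ 0 hr2]
    push_neg
    have hle : l[r] ≤ l[r+1] := List.pairwise_iff_getElem.mp hsort r (r+1) hr1 hr2 (by omega)
    have hne : l[r] ≠ l[r+1] := by
      intro h
      have := List.Nodup.getElem_inj_iff hnodup (i := r) (j := r+1) |>.mp h
      omega
    exact lt_of_le_of_ne hle hne
  have hc : l.countP (fun x => decide (x ≤ m)) = r + 1 := by omega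
  have hsplit := List.length_eq_countP_add_countP (fun x => decide (x ≤ m)) (l := l)
  have hcongr : l.countP (fun a => decide ¬(decide (a ≤ m) = true)) =
      l.countP (fun x => decide (m < x)) := by
    apply List.countP_congr
    intro a _
    simp [not_le]
  have : s.countP (fun x => m < x) = l.countP (fun x => decide (m < x)) := by
    rw [← hsl, Multiset.coe_countP]
  omega

lemma nthLargest_le_iff (s : Multiset ℝ) (ν : ℕ) (hν1 : 1 ≤ ν) (hν2 : ν ≤ Multiset.card s)
    (t : ℝ) : nthLargest s ν ≤ t ↔ Multiset.card s - ν < s.countP (· ≤ t) := by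
  set l := s.sort (· ≤ ·) with hl
  have hsl : (↑l : Multiset ℝ) = s := Multiset.sort_eq s _
  have hlen : l.length = Multiset.card s := by rw [hl, Multiset.length_sort]
  have hsort : l.Pairwise (· ≤ ·) := Multiset.pairwise_sort s _
  have hi : Multiset.card s - ν < l.length := by omega
  rw [nthLargest, ← hl, sorted_getD_le_iff hsort hi t, ← hsl, Multiset.coe_countP]

lemma measurable_nthLargest {α : Type*} [MeasurableSpace α] {ι : Type*} (f : ι → α → ℝ)
    (hf : ∀ i, Measurable (f i)) (t : Finset ι) (ν : ℕ) (hν1 : 1 ≤ ν) (hν2 : ν ≤ t.card) :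
    Measurable (fun a => nthLargest (Multiset.map (fun i => f i a) t.val) ν) := by
  classical
  apply measurable_of_Iic
  intro c
  have hN : Measurable (fun a => ∑ i ∈ t, if f i a ≤ c then 1 else 0 : α → ℕ) :=
    Finset.measurable_sum _ fun i _ =>
      Measurable.ite (measurableSet_le (hf i) measurable_const) measurable_const measurable_const
  have hset : (fun a => nthLargest (Multiset.map (fun i => f i a) t.val) ν) ⁻¹' Iic c =
      (fun a => ∑ i ∈ t, if f i a ≤ c then 1 else 0) ⁻¹' (Ioi (t.card - ν)) := by
    ext a
    simp only [mem_preimage, mem_Iic, mem_Ioi]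
    rw [nthLargest_le_iff _ _ hν1 (by simp [hν2]), Multiset.card_map]
    congr! 1
    rw [Multiset.countP_map, ← Finset.card_filter]
    rfl
  rw [hset]
  exact hN measurableSet_Ioi

lemma gauss_singleton (x : ℝ) : gaussianReal 0 1 {x} = 0 :=
  gaussianReal_absolutelyContinuous 0 one_ne_zero (by simp)

lemma gauss_Ioi : gaussianReal 0 1 (Set.Ioi 0) = 1/2 := by
  set g := gaussianReal 0 1 with hg
  have hmap : g.map (fun x => -x) = g := by
    have h := gaussianReal_map_const_mul (μ := 0) (v := 1) (-1)
    have h1 : (⟨(-1:ℝ)^2, sq_nonneg _⟩ : NNReal) * 1 = 1 := by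
      ext; norm_num
    have h2 : (fun x : ℝ => -1 * x) = fun x => -x := by funext x; ring
    rw [h2] at h
    rw [hg, h]
    congr 1
    · ring
  have hIio : g (Iio 0) = g (Ioi 0) := by
    conv_lhs => rw [← hmap]
    rw [Measure.map_apply measurable_neg measurableSet_Iio]
    congr 1
    ext x
    simp
  have h0 : g {0} = 0 := gauss_singleton 0
  have hu : g (Iio 0) + g {0} + g (Ioi 0) = 1 := by
    rw [← measure_union (by simp) (measurableSet_singleton 0)]
    rw [Set.Iio_union_right, ← measure_union (by simp [Set.disjoint_left]) measurableSet_Ioi]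
    rw [Set.Iic_union_Ioi]
    exact measure_univ
  rw [hIio, h0, add_zero] at hu
  have h2 : (2 : ℝ≥0∞) * g (Ioi 0) = 1 := by rw [two_mul]; exact hu
  rw [ENNReal.eq_div_iff two_ne_zero (by norm_num)]
  exact h2

variable {Ω : Type*} [MeasurableSpace Ω] (μ : Measure Ω) [IsProbabilityMeasure μ]

lemma diag_null (X : ℕ → Ω → ℝ) (hXmeas : ∀ i, Measurable (X i))
    (hXlaw : ∀ i, μ.map (X i) = gaussianReal 0 1)
    (hindep : iIndepFun X μ)
    (i j : ℕ) (hij : i ≠ j) : μ {ω | X i ω = X j ω} = 0 := by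
  have hfun : IndepFun (X i) (X j) μ := hindep.indepFun hij
  have hjoint : μ.map (fun ω => (X i ω, X j ω)) =
      (gaussianReal 0 1).prod (gaussianReal 0 1) := by
    have h := (indepFun_iff_map_prod_eq_prod_map_map (hXmeas i).aemeasurable
      (hXmeas j).aemeasurable).mp hfun
    rwa [hXlaw i, hXlaw j] at h
  have hD : MeasurableSet {p : ℝ × ℝ | p.1 = p.2} :=
    measurableSet_eq_fun measurable_fst measurable_snd
  have : μ {ω | X i ω = X j ω} =
      ((gaussianReal 0 1).prod (gaussianReal 0 1)) {p : ℝ × ℝ | p.1 = p.2} := by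
    rw [← hjoint, Measure.map_apply ((hXmeas i).prodMk (hXmeas j)) hD]
    rfl
  rw [this, Measure.prod_apply hD]
  have : ∀ x : ℝ, (gaussianReal 0 1) (Prod.mk x ⁻¹' {p : ℝ × ℝ | p.1 = p.2}) = 0 := by
    intro x
    have : Prod.mk x ⁻¹' {p : ℝ × ℝ | p.1 = p.2} = {x} := by ext y; simp [eq_comm]
    rw [this]; exact gauss_singleton x
  simp [gauss_singleton]

lemma indep_fin (n : ℕ) (X : ℕ → Ω → ℝ)
    (hindep : iIndepFun X μ) :
    iIndepFun (fun j : Fin n => X (j.val + 1)) μ := by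
  classical
  rw [iIndepFun_iff_measure_inter_preimage_eq_mul]
  intro S sets hsets
  set g : Fin n → ℕ := fun j => j.val + 1 with hg
  have hginj : Function.Injective g := fun a b h => Fin.ext (by simpa [hg] using h)
  set sets' : ℕ → Set ℝ := fun m =>
    if h : ∃ j : Fin n, g j = m then sets h.choose else univ with hsets'def
  have hkey : ∀ j : Fin n, sets' (g j) = sets j := by
    intro j
    have hex : ∃ j' : Fin n, g j' = g j := ⟨j, rfl⟩
    have hcj : hex.choose = j := hginj hex.choose_spec
    simp only [hsets'def, dif_pos hex, hcj]
  have h := hindep.measure_inter_preimage_eq_mul (S.image g)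
    (sets := sets') (fun i hi => by
      rcases Finset.mem_image.mp hi with ⟨j, hj, rfl⟩
      rw [hkey j]; exact hsets j hj)
  have hI : (⋂ i ∈ S.image g, X i ⁻¹' sets' i) = ⋂ j ∈ S, X (g j) ⁻¹' sets j := by
    ext x
    simp only [Set.mem_iInter, Finset.mem_image]
    constructor
    · intro h j hj
      have := h (g j) ⟨j, hj, rfl⟩
      rwa [hkey j] at this
    · rintro h i ⟨j, hj, rfl⟩
      rw [hkey j]; exact h j hj
  have hP : (∏ i ∈ S.image g, μ (X i ⁻¹' sets' i)) = ∏ j ∈ S, μ (X (g j) ⁻¹' sets j) := by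
    rw [Finset.prod_image (fun a _ b _ h => hginj h)]
    exact Finset.prod_congr rfl fun j _ => by rw [hkey j]
  rw [hI, hP] at h
  exact h

lemma map_pi_eq (n : ℕ) (X : ℕ → Ω → ℝ)
    (hXmeas : ∀ i, Measurable (X i))
    (hXlaw : ∀ i, μ.map (X i) = gaussianReal 0 1)
    (hindep : iIndepFun X μ) :
    Measure.pi (fun _ : Fin n => gaussianReal 0 1) =
      μ.map (fun ω (j : Fin n) => X (j.val + 1) ω) := by
  have hY : Measurable (fun ω (j : Fin n) => X (j.val + 1) ω) :=
    measurable_pi_lambda _ fun j => hXmeas _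
  refine Measure.pi_eq fun s hs => ?_
  rw [Measure.map_apply hY (MeasurableSet.univ_pi hs)]
  have hpre : (fun ω (j : Fin n) => X (j.val + 1) ω) ⁻¹' Set.pi univ s =
      ⋂ j ∈ (Finset.univ : Finset (Fin n)), X (j.val + 1) ⁻¹' s j := by
    ext ω; simp [Set.mem_pi]
  rw [hpre, (indep_fin μ n X hindep).measure_inter_preimage_eq_mul Finset.univ
    (sets := s) (fun j _ => hs j)]
  refine Finset.prod_congr rfl fun j _ => ?_
  rw [← hXlaw (j.val + 1), Measure.map_apply (hXmeas _) (hs j)]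

lemma perm_preserving (n : ℕ) (σ : Equiv.Perm (Fin n)) :
    MeasurePreserving (fun y : (Fin n → ℝ) => y ∘ σ)
      (Measure.pi fun _ => gaussianReal 0 1) (Measure.pi fun _ => gaussianReal 0 1) := by
  have h := MeasureTheory.measurePreserving_piCongrLeft
    (μ := fun _ : Fin n => gaussianReal 0 1) (σ.symm : Fin n ≃ Fin n)
  have hco : (⇑(MeasurableEquiv.piCongrLeft (fun _ : Fin n => ℝ) (σ.symm : Fin n ≃ Fin n))) =
      fun y : (Fin n → ℝ) => y ∘ σ := by
    funext y
    funext i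
    have := MeasurableEquiv.piCongrLeft_apply_apply (σ.symm : Fin n ≃ Fin n)
      (β := fun _ => ℝ) y (σ i)
    simpa using this
  rwa [hco] at h

lemma mm_perm (n : ℕ) (ν : ℕ) (σ : Equiv.Perm (Fin n)) (y : Fin n → ℝ) :
    nthLargest (Multiset.map (y ∘ σ) (Finset.univ : Finset (Fin n)).val) ν =
    nthLargest (Multiset.map y (Finset.univ : Finset (Fin n)).val) ν := by
  congr 1
  have h1 : (Multiset.map (y ∘ σ) (Finset.univ : Finset (Fin n)).val) =
      Multiset.map y (Multiset.map σ (Finset.univ : Finset (Fin n)).val) := by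
    rw [Multiset.map_map]
  rw [h1]
  congr 1
  have h2 := Finset.map_univ_equiv (σ : Fin n ≃ Fin n)
  calc Multiset.map (⇑σ) Finset.univ.val
      = (Finset.univ.map (σ : Fin n ≃ Fin n).toEmbedding).val := by
        rw [Finset.map_val]; rfl
    _ = Finset.univ.val := by rw [h2]

lemma double_count {α : Type*} [DecidableEq α] (s : Finset α) (P : α → Prop) [DecidablePred P] :
    (∑ i ∈ s, ∑ j ∈ s.erase i, (if P i ∧ P j then 1 else 0 : ℕ))
      + (∑ i ∈ s, (if P i then 1 else 0 : ℕ))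
      = (∑ i ∈ s, (if P i then 1 else 0 : ℕ)) * (∑ i ∈ s, (if P i then 1 else 0 : ℕ)) := by
  rw [← Finset.sum_add_distrib]
  have h1 : ∀ i ∈ s, ((∑ j ∈ s.erase i, (if P i ∧ P j then 1 else 0 : ℕ))
      + (if P i then 1 else 0)) = ∑ j ∈ s, (if P i ∧ P j then 1 else 0 : ℕ) := by
    intro i hi
    have h := Finset.sum_erase_add s (fun j => (if P i ∧ P j then 1 else 0 : ℕ)) hi
    simpa [and_self] using h
  rw [Finset.sum_congr rfl h1]
  have h2 : ∀ i j, (if P i ∧ P j then 1 else 0 : ℕ)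
      = (if P i then 1 else 0) * (if P j then 1 else 0) := by
    intro i j; by_cases hi : P i <;> by_cases hj : P j <;> simp [hi, hj]
  simp_rw [h2, ← Finset.mul_sum]
  rw [← Finset.sum_mul]

end Aux

open scoped ENNReal

/-- For odd `n ≥ 3`, `1 ≤ k < n`, i.i.d. standard Gaussians
`X₁, …, X_n` with sample median `m̂ = X_{ν,n}` (`ν = (n+1)/2`), the estimator
`p̂_k = (1/(n-k)) Σ_{j=1}^{n-k} 1(X_j > m̂, X_{j+k} > m̂)` has expectation
`1/4 - 3/(4n)`; in particular its bias as an estimator of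
`p_k = P(X₁ > 0, X_{1+k} > 0) = 1/4` is `-3/(4n) = O(1/n)`. -/
theorem pHat_median_bias_odd
    {Ω : Type*} [MeasurableSpace Ω] (μ : Measure Ω) [IsProbabilityMeasure μ]
    (n : ℕ) (hodd : Odd n) (hn : 3 ≤ n)
    (k : ℕ) (hk : 1 ≤ k) (hkn : k < n)
    (X : ℕ → Ω → ℝ)
    (hXmeas : ∀ i, Measurable (X i))
    (hXlaw : ∀ i, μ.map (X i) = gaussianReal 0 1)
    (hindep : iIndepFun X μ)
    (med : Ω → ℝ)
    (hmed : med = fun ω =>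
      nthLargest (Multiset.map (fun i => X i ω) (Finset.Icc 1 n).val) ((n + 1) / 2))
    (phat : Ω → ℝ)
    (hphat : phat = fun ω => (1 / ((n : ℝ) - k)) *
      ∑ j ∈ Finset.Icc 1 (n - k),
        (if med ω < X j ω ∧ med ω < X (j + k) ω then (1 : ℝ) else 0)) :
    (μ {ω | 0 < X 1 ω ∧ 0 < X (1 + k) ω}).toReal = 1 / 4 ∧
    (∫ ω, phat ω ∂μ) = 1 / 4 - 3 / (4 * n) := by
  classical
  obtain ⟨r, hrn⟩ := hodd
  have hr1 : 1 ≤ r := by omega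
  have hν : (n + 1) / 2 = r + 1 := by omega
  constructor
  · -- first conjunct
    have hne : (1 : ℕ) ≠ 1 + k := by omega
    have hfun : IndepFun (X 1) (X (1 + k)) μ := hindep.indepFun hne
    have hset : {ω | 0 < X 1 ω ∧ 0 < X (1 + k) ω} =
        X 1 ⁻¹' Ioi 0 ∩ X (1 + k) ⁻¹' Ioi 0 := by
      ext ω; exact Iff.rfl
    have hval : ∀ i : ℕ, μ (X i ⁻¹' Ioi 0) = 1/2 := by
      intro i
      rw [← Measure.map_apply (hXmeas i) measurableSet_Ioi, hXlaw i]
      exact gauss_Ioi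
    rw [hset, hfun.measure_inter_preimage_eq_mul _ _ measurableSet_Ioi measurableSet_Ioi,
      hval, hval]
    rw [ENNReal.toReal_mul]
    simp [ENNReal.toReal_div]
    norm_num
  · -- second conjunct
    set s : Finset ℕ := Finset.Icc 1 n with hs
    have hscard : s.card = n := by rw [hs, Nat.card_Icc]; omega
    -- med is measurable
    have hmedmeas : Measurable med := by
      rw [hmed]
      exact measurable_nthLargest X hXmeas s ((n + 1) / 2) (by omega) (by omega)
    -- the pair events in Ω
    set A : ℕ → ℕ → Set Ω := fun i j => {ω | med ω < X i ω ∧ med ω < X j ω} with hA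
    have hAmeas : ∀ i j, MeasurableSet (A i j) := fun i j =>
      (measurableSet_lt hmedmeas (hXmeas i)).inter (measurableSet_lt hmedmeas (hXmeas j))
    -- vector space setup
    set pm : Measure (Fin n → ℝ) := Measure.pi (fun _ => gaussianReal 0 1) with hpm
    haveI : IsProbabilityMeasure pm := by rw [hpm]; infer_instance
    set Y : Ω → (Fin n → ℝ) := fun ω (j : Fin n) => X (j.val + 1) ω with hY
    have hYmeas : Measurable Y := measurable_pi_lambda _ fun j => hXmeas _
    have hmapY : pm = μ.map Y := map_pi_eq μ n X hXmeas hXlaw hindep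
    set mm : (Fin n → ℝ) → ℝ := fun y =>
      nthLargest (Multiset.map y (Finset.univ : Finset (Fin n)).val) ((n + 1) / 2) with hmm
    have hmm_meas : Measurable mm := by
      rw [hmm]
      exact measurable_nthLargest (fun (i : Fin n) (y : Fin n → ℝ) => y i)
        (fun i => measurable_pi_apply i) Finset.univ ((n + 1) / 2)
        (by omega) (by rw [Finset.card_univ, Fintype.card_fin]; omega)
    -- med ω = mm (Y ω)
    have hmultiset : Multiset.map (fun j : Fin n => j.val + 1)
        (Finset.univ : Finset (Fin n)).val = s.val := by
      have : (Finset.univ.map ⟨fun j : Fin n => j.val + 1,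
          fun a b h => Fin.ext (by simpa using h)⟩) = s := by
        ext m
        simp only [Finset.mem_map, Function.Embedding.coeFn_mk, Finset.mem_univ, true_and,
          hs, Finset.mem_Icc]
        constructor
        · rintro ⟨a, rfl⟩; show 1 ≤ a.val + 1 ∧ a.val + 1 ≤ n; have := a.isLt; omega
        · intro hm; exact ⟨⟨m - 1, by omega⟩, by show m - 1 + 1 = m; omega⟩
      rw [← this, Finset.map_val]
      rfl
    have hmedY : ∀ ω, med ω = mm (Y ω) := by
      intro ω
      rw [hmed, hmm]
      simp only
      congr 1
      calc Multiset.map (fun i => X i ω) s.val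
          = Multiset.map (fun i => X i ω)
              (Multiset.map (fun j : Fin n => j.val + 1)
                (Finset.univ : Finset (Fin n)).val) := by rw [hmultiset]
        _ = Multiset.map (Y ω) (Finset.univ : Finset (Fin n)).val := by
            rw [Multiset.map_map, hY]
            exact Multiset.map_congr rfl fun j _ => rfl
    -- events in the vector space
    set B : Fin n → Fin n → Set (Fin n → ℝ) := fun p q => {y | mm y < y p ∧ mm y < y q} with hB
    have hBmeas : ∀ p q, MeasurableSet (B p q) := fun p q =>
      (measurableSet_lt hmm_meas (measurable_pi_apply p)).inter
        (measurableSet_lt hmm_meas (measurable_pi_apply q))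
    have hAB : ∀ p q : Fin n, μ (A (p.val + 1) (q.val + 1)) = pm (B p q) := by
      intro p q
      rw [hmapY, Measure.map_apply hYmeas (hBmeas p q)]
      congr 1
      ext ω
      simp only [hA, Set.mem_setOf_eq, Set.mem_preimage, hB, hmedY ω]
      rfl
    -- permutation invariance: all pair events have the same measure
    have hp0 : (0 : ℕ) < n := by omega
    have hq0 : (1 : ℕ) < n := by omega
    set p0 : Fin n := ⟨0, hp0⟩ with hp0def
    set q0 : Fin n := ⟨1, hq0⟩ with hq0def
    set c : ℝ≥0∞ := pm (B p0 q0) with hc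
    have hBconst : ∀ p q : Fin n, p ≠ q → pm (B p q) = c := by
      intro p q hpq
      set τ : Equiv.Perm (Fin n) := Equiv.swap p0 p with hτ
      set b : Fin n := τ.symm q with hb
      set σ : Equiv.Perm (Fin n) := (Equiv.swap q0 b).trans τ with hσ
      have hσp : σ p0 = p := by
        have hp0q0 : p0 ≠ q0 := by simp [hp0def, hq0def]
        have hp0b : p0 ≠ b := by
          intro h
          have : τ p0 = q := by rw [h, hb]; simp
          rw [hτ, Equiv.swap_apply_left] at this
          exact hpq this
        rw [hσ]
        simp only [Equiv.trans_apply]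
        rw [Equiv.swap_apply_of_ne_of_ne hp0q0 hp0b, hτ, Equiv.swap_apply_left]
      have hσq : σ q0 = q := by
        rw [hσ]
        simp only [Equiv.trans_apply]
        rw [Equiv.swap_apply_left, hb]
        simp
      have hmmσ : ∀ y : Fin n → ℝ, mm (y ∘ σ) = mm y := by
        intro y
        rw [hmm]
        exact mm_perm n ((n+1)/2) σ y
      have hpre : B p q = (fun y : Fin n → ℝ => y ∘ σ) ⁻¹' (B p0 q0) := by
        ext y
        simp only [hB, Set.mem_setOf_eq, Set.mem_preimage, Function.comp_apply, hσp, hσq, hmmσ]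
      rw [hpre, (perm_preserving n σ).measure_preimage (hBmeas p0 q0).nullMeasurableSet]
    have hAc : ∀ i j : ℕ, i ∈ s → j ∈ s → i ≠ j → μ (A i j) = c := by
      intro i j hi hj hij
      rw [hs, Finset.mem_Icc] at hi hj
      have hifin : i - 1 < n := by omega
      have hjfin : j - 1 < n := by omega
      have h1 : (⟨i - 1, hifin⟩ : Fin n).val + 1 = i := by simp; omega
      have h2 : (⟨j - 1, hjfin⟩ : Fin n).val + 1 = j := by simp; omega
      have := hAB ⟨i - 1, hifin⟩ ⟨j - 1, hjfin⟩
      rw [h1, h2] at this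
      rw [this]
      exact hBconst _ _ (by intro h; apply hij; have := Fin.mk.injEq .. ▸ h; omega)
    -- a.e. count of points above median
    set bad : Set Ω := ⋃ (i : ℕ) (j : ℕ) (_ : i ≠ j), {ω | X i ω = X j ω} with hbad
    have hbadnull : μ bad = 0 := by
      rw [hbad]
      refine measure_iUnion_null fun i => measure_iUnion_null fun j => ?_
      by_cases hij : i = j
      · simp [hij]
      · simpa [hij] using diag_null μ X hXmeas hXlaw hindep i j hij
    -- pointwise count identity on good ω
    have hcount : ∀ ω, ω ∉ bad →
        (∑ i ∈ s, ∑ j ∈ s.erase i, (if med ω < X i ω ∧ med ω < X j ω then 1 else 0 : ℕ))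
          = r * r - r := by
      intro ω hω
      have hnodup : (Multiset.map (fun i => X i ω) s.val).Nodup := by
        refine Multiset.Nodup.map_on ?_ s.nodup
        intro x hx y hy hxy
        by_contra hne
        exact hω (Set.mem_iUnion.mpr ⟨x, Set.mem_iUnion.mpr ⟨y, Set.mem_iUnion.mpr
          ⟨hne, hxy⟩⟩⟩)
      have hcard : Multiset.card (Multiset.map (fun i => X i ω) s.val) = 2 * r + 1 := by
        rw [Multiset.card_map]
        show s.card = 2 * r + 1
        omega
      have hmedr : med ω = nthLargest (Multiset.map (fun i => X i ω) s.val) (r + 1) := by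
        rw [hmed]
        simp only
        rw [hν]
      have hMr : (∑ i ∈ s, (if med ω < X i ω then 1 else 0 : ℕ)) = r := by
        have hmc := median_countP (Multiset.map (fun i => X i ω) s.val) r hr1 hcard hnodup
        rw [Multiset.countP_map] at hmc
        have hbr : (∑ i ∈ s, (if med ω < X i ω then 1 else 0 : ℕ)) = Multiset.card
            (Multiset.filter (fun a => nthLargest
              (Multiset.map (fun i => X i ω) s.val) (r + 1) < X a ω) s.val) := by
          rw [← Finset.card_filter]
          simp only [hmedr]
          rfl
        rw [hbr]
        exact hmc
      have hsum := double_count s (fun i => med ω < X i ω)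
      beta_reduce at hsum
      rw [hMr] at hsum
      omega
    -- sum of pair probabilities
    have hae : ∀ᵐ ω ∂μ, ω ∉ bad := measure_eq_zero_iff_ae_notMem.mp hbadnull
    have hsumProb : (∑ i ∈ s, ∑ j ∈ s.erase i, μ (A i j)) = ((r * r - r : ℕ) : ℝ≥0∞) := by
      have hind : ∀ i j : ℕ, μ (A i j)
          = ∫⁻ ω, (if med ω < X i ω ∧ med ω < X j ω then (1:ℝ≥0∞) else 0) ∂μ := by
        intro i j
        rw [← lintegral_indicator_one (hAmeas i j)]
        congr 1
        funext ω
        by_cases h : med ω < X i ω ∧ med ω < X j ω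
        · have hm : ω ∈ A i j := h
          simp [Set.indicator_of_mem hm, h]
        · have hm : ω ∉ A i j := h
          simp [Set.indicator_of_notMem hm, h]
      calc (∑ i ∈ s, ∑ j ∈ s.erase i, μ (A i j))
          = ∑ i ∈ s, ∑ j ∈ s.erase i,
              ∫⁻ ω, (if med ω < X i ω ∧ med ω < X j ω then (1:ℝ≥0∞) else 0) ∂μ := by
            exact Finset.sum_congr rfl fun i _ => Finset.sum_congr rfl fun j _ => hind i j
        _ = ∑ i ∈ s, ∫⁻ ω, ∑ j ∈ s.erase i,
              (if med ω < X i ω ∧ med ω < X j ω then (1:ℝ≥0∞) else 0) ∂μ := by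
            refine Finset.sum_congr rfl fun i _ => ?_
            exact (lintegral_finset_sum _ fun j _ =>
              Measurable.ite (hAmeas i j) measurable_const measurable_const).symm
        _ = ∫⁻ ω, ∑ i ∈ s, ∑ j ∈ s.erase i,
              (if med ω < X i ω ∧ med ω < X j ω then (1:ℝ≥0∞) else 0) ∂μ := by
            refine (lintegral_finset_sum _ fun i _ => ?_).symm
            exact Finset.measurable_sum _ fun j _ =>
              Measurable.ite (hAmeas i j) measurable_const measurable_const
        _ = ∫⁻ _, ((r * r - r : ℕ) : ℝ≥0∞) ∂μ := by
            apply lintegral_congr_ae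
            filter_upwards [hae] with ω hω
            calc (∑ i ∈ s, ∑ j ∈ s.erase i,
                  (if med ω < X i ω ∧ med ω < X j ω then (1:ℝ≥0∞) else 0))
                = (((∑ i ∈ s, ∑ j ∈ s.erase i,
                    (if med ω < X i ω ∧ med ω < X j ω then 1 else 0 : ℕ)) : ℕ) : ℝ≥0∞) := by
                  rw [Nat.cast_sum]
                  refine Finset.sum_congr rfl fun i _ => ?_
                  rw [Nat.cast_sum]
                  refine Finset.sum_congr rfl fun j _ => ?_
                  split <;> simp
              _ = ((r * r - r : ℕ) : ℝ≥0∞) := by rw [hcount ω hω]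
        _ = ((r * r - r : ℕ) : ℝ≥0∞) := by
            rw [lintegral_const, measure_univ, mul_one]
    -- all terms equal c
    have hsumc : (∑ i ∈ s, ∑ j ∈ s.erase i, μ (A i j)) = ((n * (n - 1) : ℕ) : ℝ≥0∞) * c := by
      have : ∀ i ∈ s, (∑ j ∈ s.erase i, μ (A i j)) = ((n - 1 : ℕ) : ℝ≥0∞) * c := by
        intro i hi
        rw [Finset.sum_congr rfl (fun j hj => hAc i j hi (Finset.mem_of_mem_erase hj)
          (Ne.symm (Finset.ne_of_mem_erase hj)))]
        rw [Finset.sum_const, Finset.card_erase_of_mem hi, hscard]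
        simp [nsmul_eq_mul]
      rw [Finset.sum_congr rfl this, Finset.sum_const, hscard]
      rw [nsmul_eq_mul]
      push_cast
      ring
    have hceq : ((n * (n - 1) : ℕ) : ℝ≥0∞) * c = ((r * r - r : ℕ) : ℝ≥0∞) := by
      rw [← hsumc, hsumProb]
    -- extract real value of c
    have hcfin : c ≠ ∞ := (measure_lt_top pm _).ne
    have hcreal : ((n * (n - 1) : ℕ) : ℝ) * c.toReal = ((r * r - r : ℕ) : ℝ) := by
      have := congrArg ENNReal.toReal hceq
      rwa [ENNReal.toReal_mul, ENNReal.toReal_natCast, ENNReal.toReal_natCast] at this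
    have hctr : c.toReal = ((r * r - r : ℕ) : ℝ) / ((n * (n - 1) : ℕ) : ℝ) := by
      rw [eq_div_iff]
      · linarith [hcreal]
      · have : (0:ℕ) < n * (n - 1) := by
          apply Nat.mul_pos <;> omega
        positivity
    -- compute the integral of phat
    have hterm : ∀ j ∈ Finset.Icc 1 (n - k),
        (∫ ω, (if med ω < X j ω ∧ med ω < X (j + k) ω then (1:ℝ) else 0) ∂μ) = c.toReal := by
      intro j hj
      rw [Finset.mem_Icc] at hj
      have heq : (fun ω => (if med ω < X j ω ∧ med ω < X (j + k) ω then (1:ℝ) else 0))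
          = Set.indicator (A j (j + k)) (1 : Ω → ℝ) := by
        funext ω
        by_cases h : med ω < X j ω ∧ med ω < X (j + k) ω
        · have hm : ω ∈ A j (j + k) := h
          simp [Set.indicator_of_mem hm, h]
        · have hm : ω ∉ A j (j + k) := h
          simp [Set.indicator_of_notMem hm, h]
      rw [heq, MeasureTheory.integral_indicator_one (hAmeas j (j + k)), measureReal_def]
      rw [hAc j (j + k) (by rw [hs, Finset.mem_Icc]; omega)
        (by rw [hs, Finset.mem_Icc]; omega) (by omega)]
    have hint : (∫ ω, phat ω ∂μ) = (1 / ((n : ℝ) - k)) * ((n - k : ℕ) * c.toReal) := by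
      rw [hphat]
      rw [MeasureTheory.integral_const_mul]
      congr 1
      rw [MeasureTheory.integral_finset_sum]
      · rw [Finset.sum_congr rfl hterm, Finset.sum_const, Nat.card_Icc, nsmul_eq_mul]
        have hcc : n - k + 1 - 1 = n - k := by omega
        rw [hcc]
      · intro j _
        have heq : (fun ω => (if med ω < X j ω ∧ med ω < X (j + k) ω then (1:ℝ) else 0))
            = Set.indicator (A j (j + k)) (1 : Ω → ℝ) := by
          funext ω
          by_cases h : med ω < X j ω ∧ med ω < X (j + k) ω
          · have hm : ω ∈ A j (j + k) := h
            simp [Set.indicator_of_mem hm, h]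
          · have hm : ω ∉ A j (j + k) := h
            simp [Set.indicator_of_notMem hm, h]
        rw [heq]
        exact (integrable_const 1).indicator (hAmeas j (j + k))
    rw [hint, hctr]
    have hnk : ((n - k : ℕ) : ℝ) = (n : ℝ) - k := by
      push_cast [Nat.cast_sub hkn.le]
      ring
    have hnr : (n : ℝ) = 2 * r + 1 := by
      rw [hrn]; push_cast; ring
    have hrr : ((r * r - r : ℕ) : ℝ) = (r : ℝ) * r - r := by
      push_cast [Nat.cast_sub (by nlinarith : r ≤ r * r)]
      ring
    have hn1 : ((n - 1 : ℕ) : ℝ) = (n : ℝ) - 1 := by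
      push_cast [Nat.cast_sub (by omega : 1 ≤ n)]
      ring
    rw [hnk, hrr]
    push_cast [hn1]
    rw [hnr]
    have hr0 : (1:ℝ) ≤ (r:ℝ) := by exact_mod_cast hr1
    have hne1 : (2 * (r:ℝ) + 1) - (k:ℝ) ≠ 0 := by
      have : (k : ℝ) < (n : ℝ) := by exact_mod_cast hkn
      rw [hnr] at this
      linarith
    field_simp
    ring
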